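/- Let P ∈ ℝ^{N×m} and Q ∈ ℝ^{N×n} satisfy PᵗP = I_m and QᵗQ = I_n, and suppose PᵗQ = A/‖A‖_F for some matrix A with SVD A = Σ σ_i u_i v_iᵗ. Define the reflections U = 2PPᵗ − I_N and V = 2QQᵗ − I_N, and W = U·V. Then for each singular pair (u_i, v_i) with σ_i > 0, the two-dimensional subspace Span(Pu_i, Qv_i) is invariant under W, and we have PPᵗQv_i = (σ_i/‖A‖_F)·Pu_i and QQᵗPu_i = (σ_i/‖A‖_F)·Qv_i. -/
import Mathlib

open Matrix

private lemma aux2' {m n r : ℕ}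
    (s : Fin r → ℝ) (u : Fin r → Fin m → ℝ) (v : Fin r → Fin n → ℝ)
    (hv : ∀ i j, ∑ a, v i a * v j a = if i = j then (1:ℝ) else 0)
    (i : Fin r) :
    (∑ j, s j • Matrix.vecMulVec (u j) (v j)).mulVec (v i) = s i • u i := by
  ext a
  simp only [mulVec, dotProduct, Matrix.sum_apply, Matrix.smul_apply, vecMulVec_apply,
    Finset.sum_mul, smul_eq_mul, Pi.smul_apply]
  rw [Finset.sum_comm]
  have : ∀ j, ∑ x, s j * (u j a * v j x) * v i x
      = s j * u j a * (if j = i then (1:ℝ) else 0) := by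
    intro j
    rw [← hv j i, Finset.mul_sum]
    congr 1; ext x; ring
  simp only [this]
  simp [Finset.sum_ite_eq]

private lemma refl_mulVec {N : ℕ} (M : Matrix (Fin N) (Fin N) ℝ) (x : Fin N → ℝ) :
    (2 • M - 1).mulVec x = 2 • (M.mulVec x) - x := by
  rw [Matrix.sub_mulVec, Matrix.one_mulVec, two_smul, two_smul, Matrix.add_mulVec]

theorem stmt8 {N m n r : ℕ}
    (P : Matrix (Fin N) (Fin m) ℝ) (Q : Matrix (Fin N) (Fin n) ℝ)
    (A : Matrix (Fin m) (Fin n) ℝ)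
    (s : Fin r → ℝ) (u : Fin r → Fin m → ℝ) (v : Fin r → Fin n → ℝ)
    (hu : ∀ i j, ∑ a, u i a * u j a = if i = j then (1:ℝ) else 0)
    (hv : ∀ i j, ∑ a, v i a * v j a = if i = j then (1:ℝ) else 0)
    (hA : A = ∑ i, s i • Matrix.vecMulVec (u i) (v i))
    (F : ℝ) (hF : F = Real.sqrt (∑ i, ∑ j, (A i j)^2)) (hFpos : 0 < F)
    (hP : Pᵀ * P = 1) (hQ : Qᵀ * Q = 1)
    (hPQ : Pᵀ * Q = F⁻¹ • A)
    (W : Matrix (Fin N) (Fin N) ℝ)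
    (hW : W = (2 • (P * Pᵀ) - 1) * (2 • (Q * Qᵀ) - 1))
    (i : Fin r) (hσ : 0 < s i) :
    (∀ z ∈ Submodule.span ℝ ({P.mulVec (u i), Q.mulVec (v i)} : Set (Fin N → ℝ)),
        W.mulVec z ∈ Submodule.span ℝ ({P.mulVec (u i), Q.mulVec (v i)} : Set (Fin N → ℝ))) ∧
    (P * Pᵀ * Q).mulVec (v i) = (s i / F) • P.mulVec (u i) ∧
    (Q * Qᵀ * P).mulVec (u i) = (s i / F) • Q.mulVec (v i) := by
  set a := P.mulVec (u i) with ha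
  set b := Q.mulVec (v i) with hb
  set c := s i / F with hc
  -- A vᵢ = sᵢ uᵢ
  have hAv : A.mulVec (v i) = s i • u i := by rw [hA]; exact aux2' s u v hv i
  -- Aᵀ uᵢ = sᵢ vᵢ
  have hAt : Aᵀ.mulVec (u i) = s i • v i := by
    have hAT : Aᵀ = ∑ j, s j • Matrix.vecMulVec (v j) (u j) := by
      rw [hA]; ext x y
      simp [Matrix.sum_apply, vecMulVec_apply, mul_comm]
    rw [hAT]; exact aux2' s v u hu i
  have h2 : (P * Pᵀ * Q).mulVec (v i) = c • a := by
    rw [Matrix.mul_assoc, hPQ, ← Matrix.mulVec_mulVec, Matrix.smul_mulVec, hAv,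
      ha, Matrix.mulVec_smul, Matrix.mulVec_smul, smul_smul, hc, div_eq_inv_mul]
  have hQP : Qᵀ * P = F⁻¹ • Aᵀ := by
    have := congrArg Matrix.transpose hPQ
    simpa [Matrix.transpose_mul, Matrix.transpose_smul] using this
  have h3 : (Q * Qᵀ * P).mulVec (u i) = c • b := by
    rw [Matrix.mul_assoc, hQP, ← Matrix.mulVec_mulVec, Matrix.smul_mulVec, hAt,
      hb, Matrix.mulVec_smul, Matrix.mulVec_smul, smul_smul, hc, div_eq_inv_mul]
  have hPa : (P * Pᵀ).mulVec a = a := by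
    rw [ha, Matrix.mulVec_mulVec, Matrix.mul_assoc, hP, Matrix.mul_one]
  have hQb : (Q * Qᵀ).mulVec b = b := by
    rw [hb, Matrix.mulVec_mulVec, Matrix.mul_assoc, hQ, Matrix.mul_one]
  have hPb : (P * Pᵀ).mulVec b = c • a := by
    rw [hb, Matrix.mulVec_mulVec]; exact h2
  have hQa : (Q * Qᵀ).mulVec a = c • b := by
    rw [ha, Matrix.mulVec_mulVec]; exact h3
  refine ⟨?_, h2, h3⟩
  -- invariance
  intro z hz
  rw [Submodule.mem_span_pair] at hz ⊢
  obtain ⟨x, y, rfl⟩ := hz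
  have hWz : ∀ w : Fin N → ℝ, W.mulVec w
      = 2 • ((P * Pᵀ).mulVec (2 • ((Q * Qᵀ).mulVec w) - w)) - (2 • ((Q * Qᵀ).mulVec w) - w) := by
    intro w
    rw [hW, ← Matrix.mulVec_mulVec, refl_mulVec, refl_mulVec]
  have hWa : W.mulVec a = (4 * c ^ 2 - 1) • a - (2 * c) • b := by
    rw [hWz a, hQa]
    simp only [smul_smul, Matrix.mulVec_sub, Matrix.mulVec_smul, hPb, hPa]
    module
  have hWb : W.mulVec b = (2 * c) • a - b := by
    rw [hWz b, hQb]
    simp only [Matrix.mulVec_sub, Matrix.mulVec_smul, hPb, hPa]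
    module
  refine ⟨x * (4 * c ^ 2 - 1) + y * (2 * c), -(x * (2 * c)) - y, ?_⟩
  rw [Matrix.mulVec_add, Matrix.mulVec_smul, Matrix.mulVec_smul, hWa, hWb]
  module
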